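/- Let k be a field and B a finite-dimensional commutative local k-algebra equipped with a k-algebra homomorphism π : B → k. Let R ⊆ S be an extension of k-algebras such that S is a formally smooth R-algebra, and let ∂ : R → S ⊗_k B be a B-operator from R to S whose underlying homomorphism ∂₀ : R → S is the inclusion. Then ∂ extends to a B-operator on S: there exists a k-algebra homomorphism ∂' : S → S ⊗_k B such that (id_S ⊗ π) ∘ ∂' = id_S and ∂'|_R = ∂. -/

import Mathlib

open TensorProduct

/-- The underlying homomorphism extractor `∂₀ = (id_T ⊗ π) ∘ ∂` of a `B`-operator:
the algebra map `T ⊗[k] B → T` induced by `π : B → k` and `T ⊗[k] k ≅ T`. -/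
noncomputable def BOp.counit (k T B : Type*) [CommSemiring k] [CommSemiring T] [Algebra k T]
    [CommSemiring B] [Algebra k B] (π : B →ₐ[k] k) : T ⊗[k] B →ₐ[k] T :=
  (Algebra.TensorProduct.rid k k T).toAlgHom.comp
    (Algebra.TensorProduct.map (AlgHom.id k T) π)

/-- Let `B` be a finite-dimensional commutative local `k`-algebra with a `k`-algebra map
`π : B → k`, and let `R ⊆ S` be an extension of `k`-algebras with `S` formally smooth over `R`.
If `δ : R → S ⊗[k] B` is a `B`-operator whose underlying homomorphism `δ₀ : R → S` is the
inclusion, then `δ` extends to a `B`-operator on `S`: there exists a `k`-algebra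
homomorphism `δ' : S → S ⊗[k] B` with `(id_S ⊗ π) ∘ δ' = id_S` and `δ'|_R = δ`. -/
theorem BOperator.extends_of_formallySmooth.{u}
    (k B : Type*) [Field k] [CommRing B] [Algebra k B]
    [FiniteDimensional k B] [IsLocalRing B] (π : B →ₐ[k] k)
    (R S : Type u) [CommRing R] [Algebra k R] [CommRing S] [Algebra k S]
    [Algebra R S] [IsScalarTower k R S]
    (hRS : Function.Injective (algebraMap R S))
    [Algebra.FormallySmooth R S]
    (δ : R →ₐ[k] S ⊗[k] B)
    (h0 : (BOp.counit k S B π).comp δ = IsScalarTower.toAlgHom k R S) :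
    ∃ δ' : S →ₐ[k] S ⊗[k] B,
      (BOp.counit k S B π).comp δ' = AlgHom.id k S ∧
        δ'.comp (IsScalarTower.toAlgHom k R S) = δ := by
  classical
  set p := BOp.counit k S B π with hp
  -- counit evaluated on simple tensors
  have hp_tmul : ∀ (s : S) (b : B), p (s ⊗ₜ[k] b) = π b • s := by
    intro s b
    simp [hp, BOp.counit, Algebra.smul_def, mul_comm]
  -- ker π is nilpotent
  have hπsurj : Function.Surjective π := fun c => ⟨algebraMap k B c, by simp⟩
  haveI : IsArtinian k B := inferInstance
  haveI : IsArtinianRing B := isArtinian_of_tower k inferInstance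
  have hmax : (RingHom.ker π).IsMaximal := RingHom.ker_isMaximal_of_surjective π hπsurj
  have hker_eq : (RingHom.ker π : Ideal B) = IsLocalRing.maximalIdeal B :=
    IsLocalRing.eq_maximalIdeal hmax
  have hmnil : IsNilpotent (RingHom.ker π : Ideal B) := by
    rw [hker_eq, ← IsLocalRing.jacobson_eq_maximalIdeal (⊥ : Ideal B) bot_ne_top]
    exact IsArtinianRing.isNilpotent_jacobson_bot
  -- J = ideal generated by 1 ⊗ ker π
  set J : Ideal (S ⊗[k] B) :=
    Ideal.map (Algebra.TensorProduct.includeRight : B →ₐ[k] S ⊗[k] B) (RingHom.ker π) with hJdef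
  have hJnil : IsNilpotent J := by
    obtain ⟨n, hn⟩ := hmnil
    exact ⟨n, by rw [hJdef, ← Ideal.map_pow, hn]; simpa using (Ideal.map_bot (f := (Algebra.TensorProduct.includeRight : B →ₐ[k] S ⊗[k] B)))⟩
  -- ker p ≤ J
  have hsub : ∀ x : S ⊗[k] B, x - (p x) ⊗ₜ[k] 1 ∈ J := by
    intro x
    induction x using TensorProduct.induction_on with
    | zero => simp
    | tmul s b =>
        have hb : b - algebraMap k B (π b) ∈ RingHom.ker π := by
          simp [RingHom.mem_ker, map_sub]
        have : s ⊗ₜ[k] b - (p (s ⊗ₜ[k] b)) ⊗ₜ[k] 1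
            = (s ⊗ₜ[k] (1 : B)) * ((1 : S) ⊗ₜ[k] (b - algebraMap k B (π b))) := by
          rw [hp_tmul]
          rw [Algebra.TensorProduct.tmul_mul_tmul, mul_one, one_mul, TensorProduct.tmul_sub]
          congr 1
          rw [Algebra.algebraMap_eq_smul_one, TensorProduct.tmul_smul, TensorProduct.smul_tmul']
        rw [this]
        exact Ideal.mul_mem_left _ _ (Ideal.mem_map_of_mem _ hb)
    | add x y hx hy =>
        have := J.add_mem hx hy
        rw [map_add, TensorProduct.add_tmul] at *
        convert this using 1
        ring
  have hkerp : RingHom.ker (p : S ⊗[k] B →+* S) ≤ J := by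
    intro x hx
    have := hsub x
    rw [RingHom.mem_ker] at hx
    rwa [show p x = (p : S ⊗[k] B →+* S) x from rfl, hx, TensorProduct.zero_tmul, sub_zero] at this
  have hkernil : IsNilpotent (RingHom.ker (p : S ⊗[k] B →+* S)) := by
    obtain ⟨n, hn⟩ := hJnil
    refine ⟨n, le_bot_iff.mp ?_⟩
    calc RingHom.ker (p : S ⊗[k] B →+* S) ^ n ≤ J ^ n := pow_le_pow_left' hkerp n
      _ = ⊥ := hn
  -- Put the R-algebra structure on S ⊗ B via δ
  letI : Algebra R (S ⊗[k] B) := δ.toRingHom.toAlgebra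
  let pR : S ⊗[k] B →ₐ[R] S :=
    { p.toRingHom with
      commutes' := fun r => AlgHom.congr_fun h0 r }
  have hpR : ∀ x, pR x = p x := fun _ => rfl
  have hsurj : Function.Surjective pR := by
    intro s
    refine ⟨s ⊗ₜ[k] 1, ?_⟩
    rw [hpR, hp_tmul]
    simp
  have hnil : IsNilpotent (RingHom.ker (pR : S ⊗[k] B →+* S)) := hkernil
  -- shrink S ⊗[k] B to universe u
  haveI hsmall : Small.{u} (S ⊗[k] B) :=
    small_map ((Module.finBasis k B).baseChange S).repr.toEquiv
  let A' := Shrink.{u} (S ⊗[k] B)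
  let eqv : (S ⊗[k] B) ≃ₐ[R] A' := (Shrink.algEquiv R (S ⊗[k] B)).symm
  let pR' : A' →ₐ[R] S := pR.comp eqv.symm.toAlgHom
  have hsurj' : Function.Surjective pR' := hsurj.comp eqv.symm.surjective
  have hker' : RingHom.ker (pR' : A' →+* S)
      = Ideal.map (eqv : (S ⊗[k] B) ≃+* A') (RingHom.ker (pR : S ⊗[k] B →+* S)) := by
    ext x
    rw [← Ideal.comap_symm]
    simp only [Ideal.mem_comap, RingHom.mem_ker]
    rfl
  have hnil' : IsNilpotent (RingHom.ker (pR' : A' →+* S)) := by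
    obtain ⟨n, hn⟩ := hnil
    refine ⟨n, ?_⟩
    rw [hker', ← Ideal.map_pow, hn]
    simpa using Ideal.map_bot (f := ((eqv : (S ⊗[k] B) ≃+* A') : (S ⊗[k] B) →+* A'))
  let σ' : S →ₐ[R] A' :=
    Algebra.FormallySmooth.liftOfSurjective (AlgHom.id R S) pR' hsurj' hnil'
  let σ : S →ₐ[R] S ⊗[k] B := eqv.symm.toAlgHom.comp σ'
  have hσ : ∀ s, pR (σ s) = s := fun s =>
    Algebra.FormallySmooth.liftOfSurjective_apply (AlgHom.id R S) pR' hsurj' hnil' s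
  refine ⟨{ σ.toRingHom with
      commutes' := fun c => by
        show σ (algebraMap k S c) = algebraMap k (S ⊗[k] B) c
        rw [IsScalarTower.algebraMap_apply k R S c, σ.commutes]
        exact δ.commutes c }, ?_, ?_⟩
  · ext s
    exact hσ s
  · ext r
    show σ (algebraMap R S r) = δ r
    rw [σ.commutes]
    rfl
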